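/- Let f, g ∈ L¹(V) with f ≥ 0 almost everywhere. Then ∫_V sgn⁺(f(v) − g(v))·[σ(⟨f⟩)L(f)(v) − σ(⟨g⟩)L(g)(v)] dv ≤ 0, where sgn⁺(x) := 1 if x ≥ 0 and 0 otherwise. -/

import Mathlib

/- STATEMENT 1: For `f, g ∈ L¹(V)` with `f ≥ 0` a.e. (`V = 𝕋^N` with normalized Lebesgue
measure), `∫_V sgn⁺(f − g) [σ(⟨f⟩)L(f) − σ(⟨g⟩)L(g)] dv ≤ 0`, where `sgn⁺(x) = 1` if
`x ≥ 0` and `0` otherwise, `⟨f⟩ = ∫_V f`, `L(f) = ⟨f⟩ − f`, and `σ` satisfies (H1)–(H3). -/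

open MeasureTheory

noncomputable section

/-- The `N`-dimensional torus with its (normalized) Lebesgue measure. -/
abbrev Torus (N : ℕ) := Fin N → AddCircle (1 : ℝ)

instance torusProb (N : ℕ) : IsProbabilityMeasure (volume : Measure (Torus N)) := by
  constructor
  rw [MeasureTheory.volume_pi, Measure.pi_univ]
  simp [AddCircle.measure_univ]

theorem accretivity_sgn_plus
    (N : ℕ) (σ : ℝ → ℝ) (σstar σStar : ℝ) (K : NNReal)
    (hσstar : 0 < σstar) (hσStar : 0 < σStar)
    (hσbound : ∀ y : ℝ, σstar ≤ σ y ∧ σ y ≤ σStar)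
    (hσlip : LipschitzWith K σ)
    (hσanti : Antitone σ)
    (hσmono : Monotone fun y : ℝ => σ y * y)
    (f g : Torus N → ℝ) (hf : Integrable f) (hg : Integrable g)
    (hfpos : 0 ≤ᵐ[volume] f) :
    ∫ v, (if 0 ≤ f v - g v then (1 : ℝ) else 0) *
        (σ (∫ w, f w) * ((∫ w, f w) - f v) - σ (∫ w, g w) * ((∫ w, g w) - g v)) ≤ 0 := by
  set a := ∫ w, f w with ha
  set b := ∫ w, g w with hb
  set sa := σ a with hsa
  set sb := σ b with hsb
  have hsa_pos : 0 < sa := lt_of_lt_of_le hσstar (hσbound a).1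
  have hsb_pos : 0 < sb := lt_of_lt_of_le hσstar (hσbound b).1
  rcases le_or_gt a b with hab | hab
  · -- case a ≤ b : pointwise nonpositive
    have hle : sa * a ≤ sb * b := hσmono hab
    have hσle : sb ≤ sa := hσanti hab
    apply integral_nonpos_of_ae
    filter_upwards [hfpos] with v hfv
    simp only [Pi.zero_apply] at hfv ⊢
    by_cases hc : 0 ≤ f v - g v
    · rw [if_pos hc, one_mul]
      rcases le_or_gt (g v) 0 with hgv | hgv
      · nlinarith [mul_nonneg hsa_pos.le hfv, mul_nonpos_of_nonneg_of_nonpos hsb_pos.le hgv]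
      · nlinarith [mul_nonneg (sub_nonneg.2 hσle) hgv.le, mul_nonneg hsa_pos.le hc]
    · simp [hc]
  · -- case b < a : integral comparison
    have hσle : sa ≤ sb := hσanti hab.le
    have hba : sb * b ≤ sa * a := hσmono hab.le
    set φ : Torus N → ℝ := fun v => (sa * a - sb * b) - (sa - sb) * f v - sb * max (f v - g v) 0
      with hφ
    have hpp : Integrable (fun v => max (f v - g v) 0) := (hf.sub hg).pos_part
    have hφint : Integrable φ :=
      ((integrable_const _).sub (hf.const_mul _)).sub (hpp.const_mul _)
    -- integrability of the integrand
    have hχm : AEStronglyMeasurable (fun v => if 0 ≤ f v - g v then (1:ℝ) else 0) volume := by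
      have h1 : Measurable fun x : ℝ => if 0 ≤ x then (1:ℝ) else 0 := by
        have : (fun x : ℝ => if 0 ≤ x then (1:ℝ) else 0)
            = Set.indicator (Set.Ici (0:ℝ)) (fun _ => 1) := by
          ext x; simp [Set.indicator_apply, Set.mem_Ici]
        rw [this]
        exact (measurable_const.indicator measurableSet_Ici)
      exact (h1.comp_aemeasurable (hf.sub hg).aemeasurable).aestronglyMeasurable
    have hG : Integrable (fun v => sa * (a - f v) - sb * (b - g v)) :=
      (((integrable_const a).sub hf).const_mul sa).sub (((integrable_const b).sub hg).const_mul sb)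
    have hH : Integrable (fun v => (if 0 ≤ f v - g v then (1:ℝ) else 0) *
        (sa * (a - f v) - sb * (b - g v))) := by
      refine hG.bdd_mul (c := 1) hχm (Filter.Eventually.of_forall fun x => ?_)
      split <;> simp
    -- pointwise a.e. bound
    have hle : (fun v => (if 0 ≤ f v - g v then (1:ℝ) else 0) *
        (sa * (a - f v) - sb * (b - g v))) ≤ᵐ[volume] φ := by
      filter_upwards [hfpos] with v hfv
      simp only [Pi.zero_apply] at hfv
      simp only [hφ]
      by_cases hc : 0 ≤ f v - g v
      · rw [if_pos hc, one_mul, max_eq_left hc]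
        ring_nf
        exact le_refl _
      · rw [if_neg hc, zero_mul, max_eq_right (by linarith)]
        nlinarith [mul_nonneg (sub_nonneg.2 hσle) hfv]
    have hmain := integral_mono_ae hH hφint hle
    -- compute ∫ φ
    have hPab : a - b ≤ ∫ v, max (f v - g v) 0 := by
      have h1 : ∫ v, (f v - g v) ≤ ∫ v, max (f v - g v) 0 :=
        integral_mono (hf.sub hg) hpp (fun v => le_max_left _ _)
      rwa [integral_sub hf hg] at h1
    have h1 : ∫ v, φ v
        = (∫ v, ((sa * a - sb * b) - (sa - sb) * f v)) - ∫ v, sb * max (f v - g v) 0 :=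
      integral_sub ((integrable_const _).sub (hf.const_mul _)) (hpp.const_mul _)
    have h2 : ∫ v, ((sa * a - sb * b) - (sa - sb) * f v)
        = (∫ v, (sa * a - sb * b : ℝ)) - ∫ v, (sa - sb) * f v :=
      integral_sub (integrable_const _) (hf.const_mul _)
    have hφval : ∫ v, φ v = (sa * a - sb * b) - (sa - sb) * a - sb * ∫ v, max (f v - g v) 0 := by
      rw [h1, h2, integral_const, integral_const_mul, integral_const_mul]
      simp [← ha]
    have hfinal : ∫ v, φ v ≤ 0 := by
      rw [hφval]
      nlinarith [mul_le_mul_of_nonneg_left hPab hsb_pos.le]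
    exact hmain.trans hfinal
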